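/- arXiv:2008.07575 — 8 statements merged into one kernel-verified Lean document; each statement's English description precedes it below -/
import Mathlib

section
/- In the abstract LOD setting with the approximation properties, let f ∈ H, let u ∈ H satisfy a(u,v) = ⟨f,v⟩ for all v ∈ H, and let u_LOD ∈ V_LOD satisfy a(u_LOD, v) = a(u, v) for all v ∈ V_LOD together with u − u_LOD ∈ W. Then the third-order H¹-error estimate ‖u − u_LOD‖₁ ≤ (C₁ C₂ / α) · H³ holds. -/
open scoped ComplexConjugate


private theorem lod_cs_aux {H : Type*} [AddCommGroup H] [Module ℂ H]
    (inn : H → H → ℂ)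
    (inn_add_left : ∀ x y z : H, inn (x + y) z = inn x z + inn y z)
    (inn_smul_left : ∀ (c : ℂ) (x y : H), inn (c • x) y = c * inn x y)
    (inn_conj_symm : ∀ x y : H, inn y x = conj (inn x y))
    (inn_nonneg : ∀ x : H, 0 ≤ (inn x x).re)
    (x y : H) :
    ‖inn y x‖ * ‖inn x y‖ ≤ (inn x x).re * (inn y y).re := by
  letI c : PreInnerProductSpace.Core ℂ H :=
    { inner := fun p q => inn q p
      conj_inner_symm := fun p q => (inn_conj_symm p q).symm
      re_inner_nonneg := fun p => inn_nonneg p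
      add_left := fun p q r => by
        show inn r (p + q) = inn r p + inn r q
        rw [inn_conj_symm (p + q) r, inn_add_left, map_add,
          ← inn_conj_symm p r, ← inn_conj_symm q r]
      smul_left := fun p q r => by
        show inn q (r • p) = conj r * inn q p
        rw [inn_conj_symm (r • p) q, inn_smul_left, map_mul, ← inn_conj_symm p q] }
  exact InnerProductSpace.Core.inner_mul_inner_self_le (𝕜 := ℂ) (F := H) x y

/-- Third-order H¹-error estimate for the ideal LOD approximation:
`‖u − u_LOD‖₁ ≤ (C₁ C₂ / α) · H³`. -/
theorem lod_H1_error_estimate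
    {H : Type*} [NormedAddCommGroup H] [InnerProductSpace ℂ H] [CompleteSpace H]
    (inn : H → H → ℂ)
    (inn_add_left : ∀ x y z : H, inn (x + y) z = inn x z + inn y z)
    (inn_smul_left : ∀ (c : ℂ) (x y : H), inn (c • x) y = c * inn x y)
    (inn_conj_symm : ∀ x y : H, inn y x = conj (inn x y))
    (inn_nonneg : ∀ x : H, 0 ≤ (inn x x).re)
    (inn_definite : ∀ x : H, inn x x = 0 → x = 0)
    (nl2 : H → ℝ) (hnl2 : ∀ v : H, nl2 v = Real.sqrt (inn v v).re)
    (CF : ℝ) (hCF : 0 < CF) (hFriedrichs : ∀ v : H, nl2 v ≤ CF * ‖v‖)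
    (a : H → H → ℂ)
    (a_add_left : ∀ x y z : H, a (x + y) z = a x z + a y z)
    (a_smul_left : ∀ (c : ℂ) (x y : H), a (c • x) y = c * a x y)
    (a_hermitian : ∀ x y : H, a y x = conj (a x y))
    (Ca : ℝ) (a_bounded : ∀ v w : H, ‖a v w‖ ≤ Ca * ‖v‖ * ‖w‖)
    (α : ℝ) (hα : 0 < α) (a_coercive : ∀ v : H, α * ‖v‖ ^ 2 ≤ (a v v).re)
    (P : H →L[ℂ] H)
    (P_idem : ∀ x : H, P (P x) = P x)
    (P_finite : FiniteDimensional ℂ (LinearMap.range (P : H →ₗ[ℂ] H)))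
    (P_selfadjoint : ∀ x y : H, inn (P x) y = inn x (P y))
    -- approximation properties of P (mesh size Hm) and of the datum f
    (Hm C₁ C₂ : ℝ) (hHm : 0 < Hm) (hC₁ : 0 < C₁) (hC₂ : 0 < C₂)
    (f u uLOD : H)
    (P_approx : ∀ v : H, nl2 (v - P v) ≤ C₁ * Hm * ‖v‖)
    (f_approx : nl2 (f - P f) ≤ C₂ * Hm ^ 2)
    -- u solves the variational problem, uLOD is its Ritz projection in V_LOD
    (hu : ∀ v : H, a u v = inn f v)
    (huLOD_mem : ∀ w : H, P w = 0 → a uLOD w = 0)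
    (huLOD_galerkin : ∀ v : H, (∀ w : H, P w = 0 → a v w = 0) → a uLOD v = a u v)
    (herr_W : P (u - uLOD) = 0) :
    ‖u - uLOD‖ ≤ (C₁ * C₂ / α) * Hm ^ 3 := by
  set e := u - uLOD with he
  have inn_zero_left : ∀ x : H, inn 0 x = 0 := by
    intro x
    have h := inn_smul_left 0 0 x
    simpa using h
  have inn_zero_right : ∀ x : H, inn x 0 = 0 := by
    intro x
    rw [inn_conj_symm 0 x, inn_zero_left, map_zero]
  have inn_sub_left : ∀ x y z : H, inn (x - y) z = inn x z - inn y z := by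
    intro x y z
    have hneg : inn (-y) z = - inn y z := by
      have h := inn_smul_left (-1) y z
      simpa using h
    rw [sub_eq_add_neg, inn_add_left, hneg, sub_eq_add_neg]
  have a_sub_left : ∀ x y z : H, a (x - y) z = a x z - a y z := by
    intro x y z
    have hneg : a (-y) z = - a y z := by
      have h := a_smul_left (-1) y z
      simpa using h
    rw [sub_eq_add_neg, a_add_left, hneg, sub_eq_add_neg]
  have hPe : P e = 0 := herr_W
  have h0 : a uLOD e = 0 := huLOD_mem e hPe
  have hae : a e e = inn (f - P f) e := by
    have hPfe : inn (P f) e = 0 := by rw [P_selfadjoint, hPe, inn_zero_right]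
    rw [he, a_sub_left, h0, hu, inn_sub_left, hPfe]
  -- norms
  have nl2_nonneg : ∀ v : H, 0 ≤ nl2 v := by
    intro v; rw [hnl2]; exact Real.sqrt_nonneg _
  have hsq : ∀ v : H, nl2 v * nl2 v = (inn v v).re := by
    intro v; rw [hnl2]; exact Real.mul_self_sqrt (inn_nonneg v)
  set d := f - P f with hd
  have hcs : ‖inn d e‖ ≤ nl2 d * nl2 e := by
    have h1 := lod_cs_aux inn inn_add_left inn_smul_left inn_conj_symm inn_nonneg d e
    have h2 : ‖inn e d‖ = ‖inn d e‖ := by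
      rw [inn_conj_symm d e]; exact RCLike.norm_conj _
    refine nonneg_le_nonneg_of_sq_le_sq (mul_nonneg (nl2_nonneg d) (nl2_nonneg e)) ?_
    calc ‖inn d e‖ * ‖inn d e‖ = ‖inn e d‖ * ‖inn d e‖ := by rw [h2]
      _ ≤ (inn d d).re * (inn e e).re := h1
      _ = nl2 d * nl2 e * (nl2 d * nl2 e) := by rw [← hsq d, ← hsq e]; ring
  have h4 : nl2 e ≤ C₁ * Hm * ‖e‖ := by
    have h := P_approx e
    rw [hPe, sub_zero] at h
    exact h
  have key : α * ‖e‖ ^ 2 ≤ C₁ * C₂ * Hm ^ 3 * ‖e‖ := by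
    have h1 := a_coercive e
    have h2 : (a e e).re ≤ ‖inn d e‖ := by
      rw [hae]
      calc (inn d e).re ≤ ‖inn d e‖ := Complex.re_le_norm _
        _ = ‖inn d e‖ := rfl
    have h3 : nl2 d * nl2 e ≤ (C₂ * Hm ^ 2) * (C₁ * Hm * ‖e‖) :=
      mul_le_mul f_approx h4 (nl2_nonneg e) (by positivity)
    nlinarith [hcs, nl2_nonneg d, nl2_nonneg e, norm_nonneg e]
  rcases eq_or_lt_of_le (norm_nonneg e) with hez | hez
  · rw [← hez]
    positivity
  · rw [div_mul_eq_mul_div, le_div_iff₀ hα]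
    nlinarith [key, hez]
end

section
/- In the abstract LOD setting with the approximation properties, let f ∈ H, let u ∈ H satisfy a(u,v) = ⟨f,v⟩ for all v ∈ H, and let u_LOD ∈ V_LOD satisfy a(u_LOD, v) = a(u, v) for all v ∈ V_LOD together with u − u_LOD ∈ W. Then the fourth-order L²-error estimate ‖u − u_LOD‖ ≤ (C₁² C₂ / α) · H⁴ holds. -/
open scoped ComplexConjugate


lemma abstract_cauchy_schwarz {H : Type*} [AddCommGroup H] [Module ℂ H]
    (inn : H → H → ℂ)
    (inn_add_left : ∀ x y z : H, inn (x + y) z = inn x z + inn y z)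
    (inn_smul_left : ∀ (c : ℂ) (x y : H), inn (c • x) y = c * inn x y)
    (inn_conj_symm : ∀ x y : H, inn y x = conj (inn x y))
    (inn_nonneg : ∀ x : H, 0 ≤ (inn x x).re)
    (inn_definite : ∀ x : H, inn x x = 0 → x = 0)
    (x y : H) : ‖inn x y‖ ≤ Real.sqrt (inn x x).re * Real.sqrt (inn y y).re := by
  have hz : ∀ w : H, inn 0 w = 0 := by
    intro w
    have h := inn_add_left 0 0 w
    rw [add_zero] at h
    linear_combination -h
  have hzr : ∀ w : H, inn w 0 = 0 := by
    intro w; rw [inn_conj_symm, hz]; simp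
  have hsub : ∀ u v w : H, inn (u - v) w = inn u w - inn v w := by
    intro u v w
    have h : u - v = u + (-1 : ℂ) • v := by
      simp [sub_eq_add_neg]
    rw [h, inn_add_left, inn_smul_left]; ring
  have hsmul_right : ∀ (c : ℂ) (u v : H), inn u (c • v) = conj c * inn u v := by
    intro c u v
    rw [inn_conj_symm, inn_smul_left, map_mul, ← inn_conj_symm]
  have hsub_right : ∀ u v w : H, inn u (v - w) = inn u v - inn u w := by
    intro u v w
    rw [inn_conj_symm, hsub, map_sub, ← inn_conj_symm, ← inn_conj_symm]
  have him : ∀ w : H, (inn w w).im = 0 := by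
    intro w
    have h := inn_conj_symm w w
    exact Complex.conj_eq_iff_im.mp h.symm
  by_cases hy : inn y y = 0
  · have : y = 0 := inn_definite y hy
    subst this
    rw [hzr, hy]
    simp
  · set q : ℝ := (inn y y).re with hq
    have hyy : inn y y = (q : ℂ) := by
      apply Complex.ext <;> simp [hq, him y]
    have hqpos : 0 < q := by
      rcases lt_or_eq_of_le (inn_nonneg y) with h | h
      · exact h
      · exfalso; apply hy; rw [hyy]; exact_mod_cast hq.trans h.symm
    set s : ℂ := inn x y with hs
    set t : ℂ := s / q with ht
    have hE : inn (x - t • y) (x - t • y)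
        = inn x x - (Complex.normSq s / q : ℝ) := by
      rw [hsub, hsub_right, hsub_right, inn_smul_left, hsmul_right, hsmul_right,
        inn_smul_left, hyy, ← hs, inn_conj_symm x y, ← hs, ht]
      have hq0 : (q : ℂ) ≠ 0 := by exact_mod_cast (ne_of_gt hqpos)
      have hmc : s * conj s = (Complex.normSq s : ℂ) := Complex.mul_conj s
      field_simp
      rw [map_div₀, Complex.conj_ofReal, Complex.ofReal_div, ← hmc]
      linear_combination (s * conj s) * mul_inv_cancel₀ hq0
    have hge := inn_nonneg (x - t • y)
    rw [hE] at hge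
    simp only [Complex.sub_re, Complex.ofReal_re] at hge
    have hkey : ‖s‖ ^ 2 ≤ (inn x x).re * q := by
      have hns : ‖s‖ ^ 2 = Complex.normSq s := by
        rw [Complex.sq_norm]
      rw [hns]
      have := (div_le_iff₀ hqpos).mp (by linarith : Complex.normSq s / q ≤ (inn x x).re)
      linarith
    calc ‖s‖ ≤ Real.sqrt ((inn x x).re * q) := by
          exact (Real.le_sqrt (norm_nonneg s) (mul_nonneg (inn_nonneg x) hqpos.le)).mpr hkey
      _ = Real.sqrt (inn x x).re * Real.sqrt q := Real.sqrt_mul (inn_nonneg x) q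


/-- Fourth-order L²-error estimate for the ideal LOD approximation:
`‖u − u_LOD‖ ≤ (C₁² C₂ / α) · H⁴` (L²-norm). -/
theorem lod_L2_error_estimate
    {H : Type*} [NormedAddCommGroup H] [InnerProductSpace ℂ H] [CompleteSpace H]
    (inn : H → H → ℂ)
    (inn_add_left : ∀ x y z : H, inn (x + y) z = inn x z + inn y z)
    (inn_smul_left : ∀ (c : ℂ) (x y : H), inn (c • x) y = c * inn x y)
    (inn_conj_symm : ∀ x y : H, inn y x = conj (inn x y))
    (inn_nonneg : ∀ x : H, 0 ≤ (inn x x).re)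
    (inn_definite : ∀ x : H, inn x x = 0 → x = 0)
    (nl2 : H → ℝ) (hnl2 : ∀ v : H, nl2 v = Real.sqrt (inn v v).re)
    (CF : ℝ) (hCF : 0 < CF) (hFriedrichs : ∀ v : H, nl2 v ≤ CF * ‖v‖)
    (a : H → H → ℂ)
    (a_add_left : ∀ x y z : H, a (x + y) z = a x z + a y z)
    (a_smul_left : ∀ (c : ℂ) (x y : H), a (c • x) y = c * a x y)
    (a_hermitian : ∀ x y : H, a y x = conj (a x y))
    (Ca : ℝ) (a_bounded : ∀ v w : H, ‖a v w‖ ≤ Ca * ‖v‖ * ‖w‖)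
    (α : ℝ) (hα : 0 < α) (a_coercive : ∀ v : H, α * ‖v‖ ^ 2 ≤ (a v v).re)
    (P : H →L[ℂ] H)
    (P_idem : ∀ x : H, P (P x) = P x)
    (P_finite : FiniteDimensional ℂ (LinearMap.range (P : H →ₗ[ℂ] H)))
    (P_selfadjoint : ∀ x y : H, inn (P x) y = inn x (P y))
    -- approximation properties of P (mesh size Hm) and of the datum f
    (Hm C₁ C₂ : ℝ) (hHm : 0 < Hm) (hC₁ : 0 < C₁) (hC₂ : 0 < C₂)
    (f u uLOD : H)
    (P_approx : ∀ v : H, nl2 (v - P v) ≤ C₁ * Hm * ‖v‖)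
    (f_approx : nl2 (f - P f) ≤ C₂ * Hm ^ 2)
    -- u solves the variational problem, uLOD is its Ritz projection in V_LOD
    (hu : ∀ v : H, a u v = inn f v)
    (huLOD_mem : ∀ w : H, P w = 0 → a uLOD w = 0)
    (huLOD_galerkin : ∀ v : H, (∀ w : H, P w = 0 → a v w = 0) → a uLOD v = a u v)
    (herr_W : P (u - uLOD) = 0) :
    nl2 (u - uLOD) ≤ (C₁ ^ 2 * C₂ / α) * Hm ^ 4 := by

  have inn_sub_left : ∀ u v w : H, inn (u - v) w = inn u w - inn v w := by
    intro u v w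
    have h : u - v = u + (-1 : ℂ) • v := by simp [sub_eq_add_neg]
    rw [h, inn_add_left, inn_smul_left]; ring
  have inn_zero_left : ∀ w : H, inn 0 w = 0 := by
    intro w
    have h := inn_add_left 0 0 w
    rw [add_zero] at h
    linear_combination -h
  have inn_zero_right : ∀ w : H, inn w 0 = 0 := by
    intro w; rw [inn_conj_symm, inn_zero_left]; simp
  have a_sub_left : ∀ u v w : H, a (u - v) w = a u w - a v w := by
    intro u v w
    have h : u - v = u + (-1 : ℂ) • v := by simp [sub_eq_add_neg]
    rw [h, a_add_left, a_smul_left]; ring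
  set e : H := u - uLOD with he
  -- the bilinear form identity
  have h1 : a e e = inn (f - P f) e := by
    rw [he, a_sub_left, huLOD_mem _ herr_W, hu, inn_sub_left]
    have h2 : inn (P f) (u - uLOD) = 0 := by
      rw [P_selfadjoint, herr_W, inn_zero_right]
    rw [← he, h2]
  -- Cauchy-Schwarz bound
  have hcs := abstract_cauchy_schwarz inn inn_add_left inn_smul_left inn_conj_symm
    inn_nonneg inn_definite (f - P f) e
  rw [← hnl2, ← hnl2] at hcs
  -- nl2 e small
  have hnl2e : nl2 e ≤ C₁ * Hm * ‖e‖ := by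
    have h3 := P_approx e
    rw [he] at h3 ⊢
    rw [herr_W, sub_zero] at h3
    exact h3
  have hnl2f : 0 ≤ nl2 (f - P f) := by rw [hnl2]; exact Real.sqrt_nonneg _
  have hnl2e0 : 0 ≤ nl2 e := by rw [hnl2]; exact Real.sqrt_nonneg _
  -- coercivity chain
  have hkey : α * ‖e‖ ^ 2 ≤ (C₂ * Hm ^ 2) * (C₁ * Hm * ‖e‖) := by
    have h4 : α * ‖e‖ ^ 2 ≤ (a e e).re := a_coercive e
    have h5 : (a e e).re ≤ ‖inn (f - P f) e‖ := by
      rw [h1]; exact Complex.re_le_norm _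
    have h6 : ‖inn (f - P f) e‖ ≤ nl2 (f - P f) * nl2 e :=
      hcs
    have h7 : nl2 (f - P f) * nl2 e ≤ (C₂ * Hm ^ 2) * (C₁ * Hm * ‖e‖) := by
      apply mul_le_mul f_approx hnl2e hnl2e0
      positivity
    linarith
  -- conclude
  by_cases hez : ‖e‖ = 0
  · have : nl2 e ≤ 0 := by rw [hez] at hnl2e; linarith
    have hrhs : 0 ≤ (C₁ ^ 2 * C₂ / α) * Hm ^ 4 := by positivity
    linarith
  · have hepos : 0 < ‖e‖ := lt_of_le_of_ne (norm_nonneg e) (Ne.symm hez)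
    have hbnd : ‖e‖ ≤ C₁ * C₂ * Hm ^ 3 / α := by
      rw [le_div_iff₀ hα]
      nlinarith
    have : nl2 e ≤ C₁ * Hm * (C₁ * C₂ * Hm ^ 3 / α) := by
      calc nl2 e ≤ C₁ * Hm * ‖e‖ := hnl2e
        _ ≤ C₁ * Hm * (C₁ * C₂ * Hm ^ 3 / α) := by
            apply mul_le_mul_of_nonneg_left hbnd; positivity
    calc nl2 e ≤ C₁ * Hm * (C₁ * C₂ * Hm ^ 3 / α) := this
      _ = (C₁ ^ 2 * C₂ / α) * Hm ^ 4 := by field_simp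
end

section
/- (Sixth-order superconvergence of the mass, abstract form.) Let H be a complex inner product space with inner product ⟨·,·⟩ and norm ‖·‖, and let P : H → H be a linear idempotent self-adjoint with respect to ⟨·,·⟩. Let u⁰, u⁰_LOD ∈ H with u⁰ − u⁰_LOD ∈ ker P. Then ‖u⁰‖² − ‖u⁰_LOD‖² = 2 Re⟨u⁰ − P u⁰, u⁰ − u⁰_LOD⟩ − ‖u⁰ − u⁰_LOD‖²; consequently, if ‖u⁰ − P u⁰‖ ≤ C₁ H² and ‖u⁰ − u⁰_LOD‖ ≤ C₂ H⁴ for constants C₁, C₂, H > 0, then |‖u⁰‖² − ‖u⁰_LOD‖²| ≤ 2 C₁ C₂ H⁶ + C₂² H⁸. -/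
open scoped InnerProductSpace

/-- Sixth-order superconvergence of the mass, abstract form. -/
theorem mass_superconvergence
    {H : Type*} [NormedAddCommGroup H] [InnerProductSpace ℂ H]
    (P : H →ₗ[ℂ] H)
    (P_idem : ∀ x : H, P (P x) = P x)
    (P_selfadjoint : ∀ x y : H, ⟪P x, y⟫_ℂ = ⟪x, P y⟫_ℂ)
    (u0 uLOD : H) (hker : P (u0 - uLOD) = 0)
    (C₁ C₂ Hm : ℝ) (hC₁ : 0 < C₁) (hC₂ : 0 < C₂) (hHm : 0 < Hm) :
    (‖u0‖ ^ 2 - ‖uLOD‖ ^ 2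
        = 2 * (⟪u0 - P u0, u0 - uLOD⟫_ℂ).re - ‖u0 - uLOD‖ ^ 2) ∧
    (‖u0 - P u0‖ ≤ C₁ * Hm ^ 2 → ‖u0 - uLOD‖ ≤ C₂ * Hm ^ 4 →
      |‖u0‖ ^ 2 - ‖uLOD‖ ^ 2| ≤ 2 * C₁ * C₂ * Hm ^ 6 + C₂ ^ 2 * Hm ^ 8) := by
  have hP0 : ⟪P u0, u0 - uLOD⟫_ℂ = 0 := by
    rw [P_selfadjoint, hker, inner_zero_right]
  have hinner : ⟪u0 - P u0, u0 - uLOD⟫_ℂ = ⟪u0, u0 - uLOD⟫_ℂ := by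
    rw [inner_sub_left, hP0, sub_zero]
  have hsub : ‖uLOD‖ ^ 2
      = ‖u0‖ ^ 2 - 2 * (⟪u0, u0 - uLOD⟫_ℂ).re + ‖u0 - uLOD‖ ^ 2 := by
    have := @norm_sub_sq ℂ H _ _ _ u0 (u0 - uLOD)
    rw [sub_sub_cancel] at this; exact this
  have hid : ‖u0‖ ^ 2 - ‖uLOD‖ ^ 2
      = 2 * (⟪u0 - P u0, u0 - uLOD⟫_ℂ).re - ‖u0 - uLOD‖ ^ 2 := by
    rw [hinner]; linarith
  refine ⟨hid, fun h1 h2 => ?_⟩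
  rw [hid]
  have hre : |(⟪u0 - P u0, u0 - uLOD⟫_ℂ).re| ≤ ‖u0 - P u0‖ * ‖u0 - uLOD‖ := by
    calc |(⟪u0 - P u0, u0 - uLOD⟫_ℂ).re| ≤ ‖⟪u0 - P u0, u0 - uLOD⟫_ℂ‖ :=
          Complex.abs_re_le_norm _
      _ ≤ ‖u0 - P u0‖ * ‖u0 - uLOD‖ := norm_inner_le_norm _ _
  have habs : |2 * (⟪u0 - P u0, u0 - uLOD⟫_ℂ).re - ‖u0 - uLOD‖ ^ 2|
      ≤ 2 * (‖u0 - P u0‖ * ‖u0 - uLOD‖) + ‖u0 - uLOD‖ ^ 2 := by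
    have := abs_sub (2 * (⟪u0 - P u0, u0 - uLOD⟫_ℂ).re) (‖u0 - uLOD‖ ^ 2)
    rw [abs_mul] at this
    have hn : |‖u0 - uLOD‖ ^ 2| = ‖u0 - uLOD‖ ^ 2 := abs_of_nonneg (by positivity)
    rw [hn, abs_two] at this
    linarith
  have hn1 : (0:ℝ) ≤ ‖u0 - uLOD‖ := norm_nonneg _
  have hn2 : (0:ℝ) ≤ ‖u0 - P u0‖ := norm_nonneg _
  nlinarith [mul_le_mul h1 h2 hn1 (by positivity : (0:ℝ) ≤ C₁ * Hm ^ 2),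
    sq_le_sq' (by linarith : -(C₂ * Hm ^ 4) ≤ ‖u0 - uLOD‖) h2]
end

section
/- (Sixth-order superconvergence of the a-energy, abstract form.) In the abstract LOD setting, let f ∈ H, let u ∈ H satisfy a(u,v) = ⟨f,v⟩ for all v ∈ H, and let u_LOD ∈ V_LOD satisfy a(u_LOD, v) = a(u, v) for all v ∈ V_LOD together with u − u_LOD ∈ W. Then a(u,u) − a(u_LOD, u_LOD) = ⟨f − Pf, u − u_LOD⟩, and hence |a(u,u) − a(u_LOD, u_LOD)| ≤ ‖f − Pf‖ · ‖u − u_LOD‖; in particular, if ‖f − Pf‖ ≤ C₂ H² and ‖u − u_LOD‖ ≤ C₃ H⁴, then |a(u,u) − a(u_LOD,u_LOD)| ≤ C₂ C₃ H⁶. -/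
open scoped ComplexConjugate

/-- Sixth-order superconvergence of the a-energy, abstract form:
`a(u,u) − a(u_LOD,u_LOD) = ⟨f − Pf, u − u_LOD⟩` and the resulting `O(H⁶)` bound. -/
theorem energy_superconvergence
    {H : Type*} [NormedAddCommGroup H] [InnerProductSpace ℂ H] [CompleteSpace H]
    (inn : H → H → ℂ)
    (inn_add_left : ∀ x y z : H, inn (x + y) z = inn x z + inn y z)
    (inn_smul_left : ∀ (c : ℂ) (x y : H), inn (c • x) y = c * inn x y)
    (inn_conj_symm : ∀ x y : H, inn y x = conj (inn x y))
    (inn_nonneg : ∀ x : H, 0 ≤ (inn x x).re)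
    (inn_definite : ∀ x : H, inn x x = 0 → x = 0)
    (nl2 : H → ℝ) (hnl2 : ∀ v : H, nl2 v = Real.sqrt (inn v v).re)
    (CF : ℝ) (hCF : 0 < CF) (hFriedrichs : ∀ v : H, nl2 v ≤ CF * ‖v‖)
    (a : H → H → ℂ)
    (a_add_left : ∀ x y z : H, a (x + y) z = a x z + a y z)
    (a_smul_left : ∀ (c : ℂ) (x y : H), a (c • x) y = c * a x y)
    (a_hermitian : ∀ x y : H, a y x = conj (a x y))
    (Ca : ℝ) (a_bounded : ∀ v w : H, ‖a v w‖ ≤ Ca * ‖v‖ * ‖w‖)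
    (α : ℝ) (hα : 0 < α) (a_coercive : ∀ v : H, α * ‖v‖ ^ 2 ≤ (a v v).re)
    (P : H →L[ℂ] H)
    (P_idem : ∀ x : H, P (P x) = P x)
    (P_finite : FiniteDimensional ℂ (LinearMap.range (P : H →ₗ[ℂ] H)))
    (P_selfadjoint : ∀ x y : H, inn (P x) y = inn x (P y))
    -- data f, exact solution u, Ritz projection uLOD ∈ V_LOD with u − uLOD ∈ W
    (Hm C₂ C₃ : ℝ) (hHm : 0 < Hm) (hC₂ : 0 < C₂) (hC₃ : 0 < C₃)
    (f u uLOD : H)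
    (hu : ∀ v : H, a u v = inn f v)
    (huLOD_mem : ∀ w : H, P w = 0 → a uLOD w = 0)
    (huLOD_galerkin : ∀ v : H, (∀ w : H, P w = 0 → a v w = 0) → a uLOD v = a u v)
    (herr_W : P (u - uLOD) = 0) :
    (a u u - a uLOD uLOD = inn (f - P f) (u - uLOD)) ∧
    (‖a u u - a uLOD uLOD‖ ≤ nl2 (f - P f) * nl2 (u - uLOD)) ∧
    (nl2 (f - P f) ≤ C₂ * Hm ^ 2 → nl2 (u - uLOD) ≤ C₃ * Hm ^ 4 →
      ‖a u u - a uLOD uLOD‖ ≤ C₂ * C₃ * Hm ^ 6) := by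
  -- basic linearity facts for `inn`
  have inn_zero_left : ∀ y : H, inn 0 y = 0 := by
    intro y
    have h := inn_add_left 0 0 y
    rw [add_zero] at h
    linear_combination -h
  have inn_zero_right : ∀ x : H, inn x 0 = 0 := by
    intro x
    rw [inn_conj_symm, inn_zero_left, map_zero]
  have inn_sub_left : ∀ x y z : H, inn (x - y) z = inn x z - inn y z := by
    intro x y z
    have : x - y = x + (-1 : ℂ) • y := by simp [sub_eq_add_neg]
    rw [this, inn_add_left, inn_smul_left]
    ring
  have inn_real_diag : ∀ x : H, inn x x = ((inn x x).re : ℂ) := by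
    intro x
    have h := inn_conj_symm x x
    have him : (inn x x).im = 0 := by
      have := congrArg Complex.im h
      simp [Complex.conj_im] at this
      linarith
    exact Complex.ext rfl (by simp [him])
  have nl2_nonneg : ∀ x : H, 0 ≤ nl2 x := by
    intro x; rw [hnl2]; exact Real.sqrt_nonneg _
  have inn_sub_right : ∀ x y z : H, inn x (y - z) = inn x y - inn x z := by
    intro x y z
    rw [inn_conj_symm, inn_sub_left, map_sub, ← inn_conj_symm, ← inn_conj_symm]
  have inn_smul_right : ∀ (c : ℂ) (x y : H), inn x (c • y) = conj c * inn x y := by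
    intro c x y
    rw [inn_conj_symm, inn_smul_left, map_mul, ← inn_conj_symm]
  -- Cauchy–Schwarz for inn
  have cs : ∀ x y : H, ‖inn x y‖ ≤ nl2 x * nl2 y := by
    intro x y
    by_cases hy : y = 0
    · subst hy
      rw [inn_zero_right]
      simpa using mul_nonneg (nl2_nonneg x) (nl2_nonneg 0)
    · set d : ℝ := (inn y y).re with hd
      have hdr : inn y y = (d : ℝ) := (inn_real_diag y)
      have hdpos : 0 < d := by
        rcases (inn_nonneg y).lt_or_eq with h | h
        · exact h
        · exfalso; apply hy; apply inn_definite
          rw [hdr, show d = 0 from hd.trans h.symm]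
          norm_num
      set c : ℂ := inn x y with hc
      set z : H := (d : ℂ) • x - c • y with hz
      have ezy : inn z y = 0 := by
        rw [hz, inn_sub_left, inn_smul_left, inn_smul_left, ← hc, hdr]
        ring
      have ezx : inn z x = (d : ℂ) * inn x x - c * conj c := by
        rw [hz, inn_sub_left, inn_smul_left, inn_smul_left,
          inn_conj_symm x y, ← hc]
      have ezz : inn z z = (d : ℂ) * ((d : ℂ) * inn x x - c * conj c) := by
        calc inn z z = inn z ((d : ℂ) • x - c • y) := by rw [← hz]
          _ = conj (d : ℂ) * inn z x - conj c * inn z y := by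
              rw [inn_sub_right, inn_smul_right, inn_smul_right]
          _ = (d : ℂ) * ((d : ℂ) * inn x x - c * conj c) := by
              rw [ezx, ezy, Complex.conj_ofReal]; ring
      have hcc : c * conj c = ((‖c‖ ^ 2 : ℝ) : ℂ) := by
        rw [Complex.mul_conj]
        norm_cast
        simp [Complex.normSq_eq_norm_sq]
      have hre : (inn z z).re = d * (d * (inn x x).re - ‖c‖ ^ 2) := by
        rw [ezz, hcc, inn_real_diag x]
        norm_cast
      have h0 : 0 ≤ d * (d * (inn x x).re - ‖c‖ ^ 2) := by
        rw [← hre]; exact inn_nonneg z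
      have h1 : ‖c‖ ^ 2 ≤ (inn x x).re * d := by
        nlinarith [h0, hdpos]
      have h2 : ‖c‖ ≤ Real.sqrt ((inn x x).re * d) := by
        exact (Real.le_sqrt (norm_nonneg _) (mul_nonneg (inn_nonneg x) hdpos.le)).mpr h1
      rw [hnl2, hnl2, ← hd, ← Real.sqrt_mul (inn_nonneg x)]
      exact h2
  -- The energy identity
  have eW : P (u - uLOD) = 0 := herr_W
  have haLODe : a uLOD (u - uLOD) = 0 := huLOD_mem _ eW
  have a_add_right : ∀ x y z : H, a x (y + z) = a x y + a x z := by
    intro x y z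
    rw [a_hermitian, a_add_left, map_add, ← a_hermitian, ← a_hermitian]
  have key : a u u - a uLOD uLOD = a u (u - uLOD) := by
    have h1 : a u u = a u uLOD + a u (u - uLOD) := by
      rw [← a_add_right]; congr 1; abel
    have h2 : a u uLOD = a uLOD uLOD := by
      have := a_hermitian uLOD u
      have h3 : a uLOD u = a uLOD uLOD + a uLOD (u - uLOD) := by
        rw [← a_add_right]; congr 1; abel
      rw [haLODe, add_zero] at h3
      rw [a_hermitian uLOD u, h3, ← a_hermitian uLOD uLOD]
    rw [h1, h2]; ring
  have hPfe : inn (P f) (u - uLOD) = 0 := by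
    rw [P_selfadjoint, eW, inn_zero_right]
  have main : a u u - a uLOD uLOD = inn (f - P f) (u - uLOD) := by
    rw [key, hu, inn_sub_left, hPfe, sub_zero]
  refine ⟨main, ?_, ?_⟩
  · rw [main]; exact cs _ _
  · intro hf he
    rw [main]
    calc ‖inn (f - P f) (u - uLOD)‖ ≤ nl2 (f - P f) * nl2 (u - uLOD) := cs _ _
      _ ≤ (C₂ * Hm ^ 2) * (C₃ * Hm ^ 4) :=
          mul_le_mul hf he (nl2_nonneg _) (by positivity)
      _ = C₂ * C₃ * Hm ^ 6 := by ring
end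

section
/- (Sixth-order superconvergence of the momentum, abstract form.) Let H be a complex inner product space, D : H → H a ℂ-linear map with ⟨Dv, w⟩ = −⟨v, Dw⟩ for all v, w ∈ H, and P : H → H a linear idempotent self-adjoint with respect to ⟨·,·⟩. Let u, u_LOD ∈ H with e := u − u_LOD ∈ ker P. Then |Im⟨u, Du⟩ − Im⟨u_LOD, D u_LOD⟩| ≤ 2 ‖e‖ ‖Du − P(Du)‖ + ‖e‖ ‖De‖; in particular, if ‖e‖ ≤ C₃ H⁴, ‖Du − P(Du)‖ ≤ C₄ H² and ‖De‖ ≤ C₅ H³ for constants C₃, C₄, C₅, H > 0, then |Im⟨u, Du⟩ − Im⟨u_LOD, D u_LOD⟩| ≤ 2 C₃ C₄ H⁶ + C₃ C₅ H⁷. -/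
open scoped InnerProductSpace

/-- Sixth-order superconvergence of the momentum, abstract form. -/
theorem momentum_superconvergence
    {H : Type*} [NormedAddCommGroup H] [InnerProductSpace ℂ H]
    (D : H →ₗ[ℂ] H)
    (D_skew : ∀ v w : H, ⟪D v, w⟫_ℂ = -⟪v, D w⟫_ℂ)
    (P : H →ₗ[ℂ] H)
    (P_idem : ∀ x : H, P (P x) = P x)
    (P_selfadjoint : ∀ x y : H, ⟪P x, y⟫_ℂ = ⟪x, P y⟫_ℂ)
    (u uLOD : H) (hker : P (u - uLOD) = 0)
    (C₃ C₄ C₅ Hm : ℝ) (hC₃ : 0 < C₃) (hC₄ : 0 < C₄) (hC₅ : 0 < C₅) (hHm : 0 < Hm) :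
    (|(⟪u, D u⟫_ℂ).im - (⟪uLOD, D uLOD⟫_ℂ).im|
        ≤ 2 * ‖u - uLOD‖ * ‖D u - P (D u)‖ + ‖u - uLOD‖ * ‖D (u - uLOD)‖) ∧
    (‖u - uLOD‖ ≤ C₃ * Hm ^ 4 → ‖D u - P (D u)‖ ≤ C₄ * Hm ^ 2 →
      ‖D (u - uLOD)‖ ≤ C₅ * Hm ^ 3 →
      |(⟪u, D u⟫_ℂ).im - (⟪uLOD, D uLOD⟫_ℂ).im|
        ≤ 2 * C₃ * C₄ * Hm ^ 6 + C₃ * C₅ * Hm ^ 7) := by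
  set e := u - uLOD with he
  have key : |(⟪u, D u⟫_ℂ).im - (⟪uLOD, D uLOD⟫_ℂ).im|
      ≤ 2 * ‖e‖ * ‖D u - P (D u)‖ + ‖e‖ * ‖D e‖ := by
    -- algebraic decomposition
    have h1 : ⟪u, D u⟫_ℂ - ⟪uLOD, D uLOD⟫_ℂ
        = ⟪e, D u⟫_ℂ + ⟪u, D e⟫_ℂ - ⟪e, D e⟫_ℂ := by
      simp only [he, map_sub, inner_sub_left, inner_sub_right]
      ring
    -- Im⟪u, De⟫ = Im⟪e, Du⟫
    have h2 : (⟪u, D e⟫_ℂ).im = (⟪e, D u⟫_ℂ).im := by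
      have := D_skew e u
      have h3 : ⟪u, D e⟫_ℂ = -(starRingEnd ℂ) ⟪e, D u⟫_ℂ := by
        rw [← inner_conj_symm, this, map_neg]
      rw [h3, Complex.neg_im, Complex.conj_im, neg_neg]
    -- ⟪e, Du⟫ = ⟪e, Du - P(Du)⟫
    have h4 : ⟪e, D u⟫_ℂ = ⟪e, D u - P (D u)⟫_ℂ := by
      have h5 : ⟪e, P (D u)⟫_ℂ = 0 := by
        have h6 : ⟪P (D u), e⟫_ℂ = 0 := by rw [P_selfadjoint, hker, inner_zero_right]
        rw [← inner_conj_symm, h6, map_zero]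
      rw [inner_sub_right, h5, sub_zero]
    have him : (⟪u, D u⟫_ℂ).im - (⟪uLOD, D uLOD⟫_ℂ).im
        = 2 * (⟪e, D u - P (D u)⟫_ℂ).im - (⟪e, D e⟫_ℂ).im := by
      have := congrArg Complex.im h1
      simp only [Complex.sub_im, Complex.add_im] at this
      rw [this, h2, ← h4]; ring
    rw [him]
    have b1 : |(⟪e, D u - P (D u)⟫_ℂ).im| ≤ ‖e‖ * ‖D u - P (D u)‖ :=
      le_trans (Complex.abs_im_le_norm _)
        (by exact norm_inner_le_norm (𝕜 := ℂ) e (D u - P (D u)))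
    have b2 : |(⟪e, D e⟫_ℂ).im| ≤ ‖e‖ * ‖D e‖ :=
      le_trans (Complex.abs_im_le_norm _)
        (by simpa using norm_inner_le_norm (𝕜 := ℂ) e (D e))
    calc |2 * (⟪e, D u - P (D u)⟫_ℂ).im - (⟪e, D e⟫_ℂ).im|
        ≤ |2 * (⟪e, D u - P (D u)⟫_ℂ).im| + |(⟪e, D e⟫_ℂ).im| := abs_sub _ _
      _ = 2 * |(⟪e, D u - P (D u)⟫_ℂ).im| + |(⟪e, D e⟫_ℂ).im| := by
          rw [abs_mul, abs_two]
      _ ≤ 2 * (‖e‖ * ‖D u - P (D u)‖) + ‖e‖ * ‖D e‖ := by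
          gcongr
      _ = 2 * ‖e‖ * ‖D u - P (D u)‖ + ‖e‖ * ‖D e‖ := by ring
  refine ⟨key, fun h3 h4 h5 => ?_⟩
  refine le_trans key ?_
  have hne : (0:ℝ) ≤ ‖e‖ := norm_nonneg _
  have hr : (0:ℝ) ≤ ‖D u - P (D u)‖ := norm_nonneg _
  have hd : (0:ℝ) ≤ ‖D e‖ := norm_nonneg _
  have hH : (0:ℝ) < Hm ^ 2 := by positivity
  nlinarith [mul_le_mul h3 h4 hr (by positivity : (0:ℝ) ≤ C₃ * Hm ^ 4),
    mul_le_mul h3 h5 hd (by positivity : (0:ℝ) ≤ C₃ * Hm ^ 4),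
    pow_pos hHm 6, pow_pos hHm 7]
end

section
/- (Inverse inequality in the LOD space.) In the abstract LOD setting, assume additionally the finite element inverse estimate ‖Pv‖₁ ≤ C_inv H^{−1} ‖Pv‖ for all v ∈ H, for constants C_inv, H > 0. Then every v ∈ V_LOD satisfies ‖v‖₁ ≤ (1 + C_a/α) · C_inv · H^{−1} · ‖v‖. -/
open scoped ComplexConjugate

/-- Inverse inequality in the LOD space: assuming the finite element inverse
estimate `‖Pv‖₁ ≤ C_inv H⁻¹ ‖Pv‖`, every `v ∈ V_LOD` satisfies
`‖v‖₁ ≤ (1 + C_a/α) C_inv H⁻¹ ‖v‖`. -/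
theorem lod_inverse_inequality
    {H : Type*} [NormedAddCommGroup H] [InnerProductSpace ℂ H] [CompleteSpace H]
    (inn : H → H → ℂ)
    (inn_add_left : ∀ x y z : H, inn (x + y) z = inn x z + inn y z)
    (inn_smul_left : ∀ (c : ℂ) (x y : H), inn (c • x) y = c * inn x y)
    (inn_conj_symm : ∀ x y : H, inn y x = conj (inn x y))
    (inn_nonneg : ∀ x : H, 0 ≤ (inn x x).re)
    (inn_definite : ∀ x : H, inn x x = 0 → x = 0)
    (nl2 : H → ℝ) (hnl2 : ∀ v : H, nl2 v = Real.sqrt (inn v v).re)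
    (CF : ℝ) (hCF : 0 < CF) (hFriedrichs : ∀ v : H, nl2 v ≤ CF * ‖v‖)
    (a : H → H → ℂ)
    (a_add_left : ∀ x y z : H, a (x + y) z = a x z + a y z)
    (a_smul_left : ∀ (c : ℂ) (x y : H), a (c • x) y = c * a x y)
    (a_hermitian : ∀ x y : H, a y x = conj (a x y))
    (Ca : ℝ) (a_bounded : ∀ v w : H, ‖a v w‖ ≤ Ca * ‖v‖ * ‖w‖)
    (α : ℝ) (hα : 0 < α) (a_coercive : ∀ v : H, α * ‖v‖ ^ 2 ≤ (a v v).re)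
    (P : H →L[ℂ] H)
    (P_idem : ∀ x : H, P (P x) = P x)
    (P_finite : FiniteDimensional ℂ (LinearMap.range (P : H →ₗ[ℂ] H)))
    (P_selfadjoint : ∀ x y : H, inn (P x) y = inn x (P y))
    -- finite element inverse estimate on V_H = range P (mesh size Hm)
    (Cinv Hm : ℝ) (hCinv : 0 < Cinv) (hHm : 0 < Hm)
    (P_inverse : ∀ v : H, ‖P v‖ ≤ Cinv * Hm⁻¹ * nl2 (P v)) :
    ∀ v : H, (∀ w : H, P w = 0 → a v w = 0) →
      ‖v‖ ≤ (1 + Ca / α) * Cinv * Hm⁻¹ * nl2 v := by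

  intro v hv
  -- trivial case v = 0
  by_cases hv0 : v = 0
  · have h00 : inn (0:H) 0 = 0 := by
      have := inn_smul_left 0 0 (0:H)
      simpa using this
    have hz : nl2 (0:H) = 0 := by rw [hnl2, h00]; simp
    simp [hv0, hz]
  have hvpos : (0:ℝ) < ‖v‖ := norm_pos_iff.mpr hv0
  -- Ca ≥ α > 0
  have hre_le : ∀ z : ℂ, z.re ≤ ‖z‖ := fun z =>
    Complex.re_le_norm z
  have hCa : α ≤ Ca := by
    have h1 := a_coercive v
    have h2 : (a v v).re ≤ ‖a v v‖ := hre_le _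
    have h3 := a_bounded v v
    have hsq : (0:ℝ) < ‖v‖ ^ 2 := by positivity
    nlinarith [hsq]
  have hCapos : (0:ℝ) < Ca := lt_of_lt_of_le hα hCa
  -- subtraction in first argument
  have hsub : ∀ x y z : H, a (x - y) z = a x z - a y z := by
    intro x y z
    have h1 : x - y = x + (-1 : ℂ) • y := by
      simp [sub_eq_add_neg]
    rw [h1, a_add_left, a_smul_left]; ring
  -- w := v - P v is in the kernel of P
  have hPw : P (v - P v) = 0 := by simp [map_sub, P_idem]
  have havw : a v (v - P v) = 0 := hv _ hPw
  have haww : a (v - P v) (v - P v) = - a (P v) (v - P v) := by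
    rw [hsub, havw]; ring
  -- coercivity bound on the kernel component
  have hwbound : α * ‖v - P v‖ ^ 2 ≤ Ca * ‖P v‖ * ‖v - P v‖ := by
    have h1 := a_coercive (v - P v)
    rw [haww] at h1
    have h2 : (-(a (P v) (v - P v))).re ≤ ‖a (P v) (v - P v)‖ := by
      rw [Complex.neg_re]
      calc -(a (P v) (v - P v)).re ≤ |(a (P v) (v - P v)).re| := neg_le_abs _
        _ ≤ ‖a (P v) (v - P v)‖ := by
            exact Complex.abs_re_le_norm _
    have h3 := a_bounded (P v) (v - P v)
    linarith
  have hwle : ‖v - P v‖ ≤ Ca / α * ‖P v‖ := by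
    rcases eq_or_lt_of_le (norm_nonneg (v - P v)) with h0 | h0
    · rw [← h0]
      positivity
    · have h : α * ‖v - P v‖ ≤ Ca * ‖P v‖ := by nlinarith
      rw [div_mul_eq_mul_div, le_div_iff₀ hα]
      linarith
  -- inner product auxiliary facts
  have inn_zero_left : ∀ x : H, inn 0 x = 0 := by
    intro x
    have := inn_smul_left 0 0 x
    simpa using this
  have inn_zero_right : ∀ x : H, inn x 0 = 0 := by
    intro x
    rw [inn_conj_symm, inn_zero_left]; simp
  have inn_add_right : ∀ x y z : H, inn x (y + z) = inn x y + inn x z := by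
    intro x y z
    rw [inn_conj_symm (y + z) x, inn_add_left, map_add, ← inn_conj_symm, ← inn_conj_symm]
  -- Pythagoras: cross terms vanish
  have hcross1 : inn (P v) (v - P v) = 0 := by
    rw [P_selfadjoint, hPw, inn_zero_right]
  have hcross2 : inn (v - P v) (P v) = 0 := by
    rw [inn_conj_symm (P v) (v - P v), hcross1]; simp
  have hdecomp : inn v v = inn (P v) (P v) + inn (v - P v) (v - P v) := by
    have hsplit : v = P v + (v - P v) := by abel
    calc inn v v = inn (P v + (v - P v)) (P v + (v - P v)) := by rw [← hsplit]
      _ = inn (P v) (P v) + inn (P v) (v - P v) + (inn (v - P v) (P v) + inn (v - P v) (v - P v)) := by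
          rw [inn_add_left, inn_add_right, inn_add_right]
      _ = inn (P v) (P v) + inn (v - P v) (v - P v) := by rw [hcross1, hcross2]; ring
  have hnl2P : nl2 (P v) ≤ nl2 v := by
    rw [hnl2, hnl2]
    apply Real.sqrt_le_sqrt
    have h1 := inn_nonneg (v - P v)
    have h2 : (inn v v).re = (inn (P v) (P v)).re + (inn (v - P v) (v - P v)).re := by
      rw [hdecomp, Complex.add_re]
    linarith
  -- put everything together
  have hfac : (0:ℝ) ≤ 1 + Ca / α := by positivity
  have hrest : (0:ℝ) ≤ Cinv * Hm⁻¹ := by positivity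
  calc ‖v‖ = ‖P v + (v - P v)‖ := by rw [add_sub_cancel]
    _ ≤ ‖P v‖ + ‖v - P v‖ := norm_add_le _ _
    _ ≤ ‖P v‖ + Ca / α * ‖P v‖ := by linarith
    _ = (1 + Ca / α) * ‖P v‖ := by ring
    _ ≤ (1 + Ca / α) * (Cinv * Hm⁻¹ * nl2 (P v)) := by
        apply mul_le_mul_of_nonneg_left (P_inverse v) hfac
    _ ≤ (1 + Ca / α) * (Cinv * Hm⁻¹ * nl2 v) := by
        apply mul_le_mul_of_nonneg_left _ hfac
        exact mul_le_mul_of_nonneg_left hnl2P hrest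
    _ = (1 + Ca / α) * Cinv * Hm⁻¹ * nl2 v := by ring
end

section
/- (Truncation error estimate.) Let M > 0 and let u, w ∈ ℂ satisfy |u|² ≤ M. Then |min(|w|², M) − |u|²| ≤ 2 √M · |w − u|. -/
/-- Truncation error estimate: if `|u|² ≤ M` then
`|min(|w|², M) − |u|²| ≤ 2√M |w − u|`. -/
theorem truncation_error_estimate (M : ℝ) (hM : 0 < M) (u w : ℂ)
    (hu : ‖u‖ ^ 2 ≤ M) :
    |min (‖w‖ ^ 2) M - ‖u‖ ^ 2|
      ≤ 2 * Real.sqrt M * ‖w - u‖ := by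
  set a := ‖u‖ with ha
  set b := ‖w‖ with hb
  set s := Real.sqrt M with hs
  have hs2 : s ^ 2 = M := Real.sq_sqrt hM.le
  have ha0 : 0 ≤ a := norm_nonneg u
  have hb0 : 0 ≤ b := norm_nonneg w
  have hs0 : 0 ≤ s := Real.sqrt_nonneg M
  have has : a ≤ s := by nlinarith
  have hkey : |b - a| ≤ ‖w - u‖ :=
    abs_norm_sub_norm_le w u
  have hwu0 : 0 ≤ ‖w - u‖ := norm_nonneg _
  rcases le_or_gt (b ^ 2) M with h | h
  · rw [min_eq_left h]
    have hbs : b ≤ s := by nlinarith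
    rw [abs_le]
    constructor <;> cases abs_le.mp hkey <;> nlinarith
  · rw [min_eq_right h.le]
    have hsb : s ≤ b := by nlinarith
    rw [abs_le]
    constructor <;> cases abs_le.mp hkey <;> nlinarith
end

section
/- (Mass and energy of the benchmark initial value.) Define u₀ : ℝ → ℝ by u₀(x) = ( 8(9e^{−4x} + 16e^{4x}) − 32(4e^{−2x} + 9e^{2x}) ) / ( −128 + 4e^{−6x} + 16e^{6x} + 81e^{−2x} + 64e^{2x} ). Then ∫_ℝ u₀(x)² dx = 12 and ∫_ℝ ( u₀′(x)² − u₀(x)⁴ ) dx = −48. -/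
open MeasureTheory Real Set Filter Topology

noncomputable section

private def Pn (t : ℝ) : ℝ := 72*t - 128*t^2 - 288*t^4 + 128*t^5
private def Pd (t : ℝ) : ℝ := 4 + 81*t^2 - 128*t^3 + 64*t^4 + 16*t^6
private def Pk (t : ℝ) : ℝ := 288 - 1024*t - 5832*t^2 + 13824*t^3 - 27648*t^4 - 30272*t^5 + 62208*t^6 - 24576*t^7 + 8192*t^8 + 9216*t^9 - 2048*t^10
private def Pa (t : ℝ) : ℝ := -48 - 648*t^2 + 768*t^3 - 256*t^4
private def Pw (t : ℝ) : ℝ := -128624188346937114624 + 49001160474396958286592*t^2 - 256997641967160468996096*t^3 - 2106289147628584321198464*t^4 + 13226668745582930413658112*t^5 - 36112241414122296485030928*t^6 + 107821090375319914198413312*t^7 - 258082747352704827803412480*t^8 + 415255958105594929374560256*t^9 - 338252415286335174471432960*t^10 + 151505854562985987255631872*t^11 - 96516790506531957478817792*t^12 + 64786959723113952640499712*t^13 - 36084993403907935483539456*t^14 + 17435682852402747056062464*t^15 - 7281331751276219224031232*t^16 - 546923076151136839335936*t^18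
private def Par (z : ℝ) : ℝ := -256*z^2 + 768*z^3 - 648*z^4 - 48*z^6
private def Pdr (z : ℝ) : ℝ := 16 + 64*z^2 - 128*z^3 + 81*z^4 + 4*z^6
private def Pwr (z : ℝ) : ℝ := -546923076151136839335936 - 7281331751276219224031232*z^2 + 17435682852402747056062464*z^3 - 36084993403907935483539456*z^4 + 64786959723113952640499712*z^5 - 96516790506531957478817792*z^6 + 151505854562985987255631872*z^7 - 338252415286335174471432960*z^8 + 415255958105594929374560256*z^9 - 258082747352704827803412480*z^10 + 107821090375319914198413312*z^11 - 36112241414122296485030928*z^12 + 13226668745582930413658112*z^13 - 2106289147628584321198464*z^14 - 256997641967160468996096*z^15 + 49001160474396958286592*z^16 - 128624188346937114624*z^18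

private lemma Pd_pos (t : ℝ) : 0 < Pd t := by
  unfold Pd; nlinarith [sq_nonneg (t*(t-1)), sq_nonneg t, sq_nonneg (t^3), sq_nonneg (t^2)]

private lemma Pdr_pos (z : ℝ) : 0 < Pdr z := by
  unfold Pdr; nlinarith [sq_nonneg (z*(z-1)), sq_nonneg (z^2), sq_nonneg (z^3)]

private lemma cont_Pd : Continuous Pd := by unfold Pd; fun_prop
private lemma cont_Pa : Continuous Pa := by unfold Pa; fun_prop
private lemma cont_Pw : Continuous Pw := by unfold Pw; fun_prop
private lemma cont_Pdr : Continuous Pdr := by unfold Pdr; fun_prop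
private lemma cont_Par : Continuous Par := by unfold Par; fun_prop
private lemma cont_Pwr : Continuous Pwr := by unfold Pwr; fun_prop

private lemma Pbound (t : ℝ) (ht : 0 ≤ t) : Pn t ^ 2 ≤ 512 * Pd t ^ 2 := by
  have h23 : (0:ℝ) ≤ t^2 + 2*t + 3 := by nlinarith [sq_nonneg (t+1)]
  have h31 : (0:ℝ) ≤ 3*t^2 + 2*t + 1 := by nlinarith [sq_nonneg (t+1), sq_nonneg t]
  have c1 : (0:ℝ) ≤ (256*t^2 + 576*t^4) * (144*t + 256*t^5) := by
    apply mul_nonneg (by positivity)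
    have h5 : (0:ℝ) ≤ t^5 := pow_nonneg ht 5
    nlinarith [ht, h5]
  have hT1 : (0:ℝ) ≤ (t*(t-1))^2 := sq_nonneg _
  have hT2 : (0:ℝ) ≤ t^4 * ((t-1)^2 * (t^2+2*t+3)) :=
    mul_nonneg (by positivity) (mul_nonneg (sq_nonneg _) h23)
  have hT3 : (0:ℝ) ≤ (t^2*(t^2-1))^2 := sq_nonneg _
  have hT4 : (0:ℝ) ≤ t^4 * ((t-1)^2 * (3*t^2+2*t+1)) :=
    mul_nonneg (by positivity) (mul_nonneg (sq_nonneg _) h31)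
  have hT5 : (0:ℝ) ≤ t^8 * ((t-1)^2 * (t^2+2*t+3)) :=
    mul_nonneg (by positivity) (mul_nonneg (sq_nonneg _) h23)
  have hT6 : (0:ℝ) ≤ (t^4*(t^2-1))^2 := sq_nonneg _
  have c3 : (0:ℝ) ≤ (64*t^2*(t-1)^2) * ((4 + 17*t^2 + 16*t^6) + Pd t) := by
    have hp := Pd_pos t
    apply mul_nonneg (by positivity)
    nlinarith [sq_nonneg t, pow_nonneg (sq_nonneg t) 3]
  unfold Pd at c3 ⊢
  unfold Pn
  nlinarith [c1, c3, hT1, hT2, hT3, hT4, hT5, hT6, sq_nonneg t, sq_nonneg (t^2),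
    sq_nonneg (t^4), sq_nonneg (t^6)]

/-- FTC on the real line for a nonnegative derivative. -/
private lemma ftc_nonneg {f f' : ℝ → ℝ} {m n : ℝ} (hd : ∀ x, HasDerivAt f (f' x) x)
    (hpos : ∀ x, 0 ≤ f' x) (hbot : Tendsto f atBot (𝓝 m)) (htop : Tendsto f atTop (𝓝 n)) :
    Integrable f' ∧ (∫ x : ℝ, f' x) = n - m := by
  have hIoi : IntegrableOn f' (Ioi 0) :=
    integrableOn_Ioi_deriv_of_nonneg' (fun x _ => hd x) (fun x _ => hpos x) htop
  have hneg : ∀ x : ℝ, HasDerivAt (fun y => -f (-y)) (f' (-x)) x := by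
    intro x
    have h1 : HasDerivAt (fun y : ℝ => f (-y)) (f' (-x) * -1) x :=
      HasDerivAt.comp x (hd (-x)) (hasDerivAt_neg x)
    have h2 := h1.neg
    simp only [mul_neg, mul_one, neg_neg] at h2
    exact h2
  have htop' : Tendsto (fun y : ℝ => -f (-y)) atTop (𝓝 (-m)) :=
    (hbot.comp tendsto_neg_atTop_atBot).neg
  have hIci' : IntegrableOn (fun x : ℝ => f' (-x)) (Ioi 0) :=
    integrableOn_Ioi_deriv_of_nonneg' (fun x _ => hneg x) (fun x _ => hpos _) htop'
  have hIic : IntegrableOn f' (Iic 0) := by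
    have h2 : IntegrableOn (fun x : ℝ => f' (-x)) (Ici 0) :=
      (integrableOn_Ici_iff_integrableOn_Ioi (by simp)).2 hIci'
    have h3 := ((Measure.measurePreserving_neg (volume : Measure ℝ)).integrableOn_comp_preimage
      (Homeomorph.neg ℝ).measurableEmbedding).2 h2
    simpa [Function.comp_def] using h3
  have hint : Integrable f' := by
    rw [← integrableOn_univ, ← Set.Iic_union_Ioi (a := (0:ℝ)), integrableOn_union]
    exact ⟨hIic, hIoi⟩
  exact ⟨hint, integral_of_hasDerivAt_of_tendsto hd hint hbot htop⟩

private lemma hasDerivAt_E (x : ℝ) :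
    HasDerivAt (fun x : ℝ => Real.exp (2*x)) (2 * Real.exp (2*x)) x := by
  have h1 : HasDerivAt (fun x : ℝ => 2*x) 2 x := by
    simpa using (hasDerivAt_id x).const_mul (2:ℝ)
  have h2 : HasDerivAt (fun x : ℝ => Real.exp (2*x)) (Real.exp (2*x) * 2) x :=
    (Real.hasDerivAt_exp (2*x)).comp x h1
  rw [show Real.exp (2*x) * 2 = 2 * Real.exp (2*x) from mul_comm _ _] at h2
  exact h2

private lemma hPn (x : ℝ) : HasDerivAt (fun x : ℝ => Pn (Real.exp (2*x)))
    (2 * Real.exp (2*x) * (72 - 256*(Real.exp (2*x)) - 1152*(Real.exp (2*x))^3 + 640*(Real.exp (2*x))^4)) x := by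
  have h := hasDerivAt_E x
  have H := ((((h.const_mul ((72):ℝ)).sub ((h.pow 2).const_mul 128)).sub ((h.pow 4).const_mul 288)).add ((h.pow 5).const_mul 128))
  simp only [Pn]
  refine H.congr_deriv ?_
  push_cast
  ring

private lemma hPd (x : ℝ) : HasDerivAt (fun x : ℝ => Pd (Real.exp (2*x)))
    (2 * Real.exp (2*x) * (162*(Real.exp (2*x)) - 384*(Real.exp (2*x))^2 + 256*(Real.exp (2*x))^3 + 96*(Real.exp (2*x))^5)) x := by
  have h := hasDerivAt_E x
  have H := (((((hasDerivAt_const x ((4):ℝ)).add ((h.pow 2).const_mul 81)).sub ((h.pow 3).const_mul 128)).add ((h.pow 4).const_mul 64)).add ((h.pow 6).const_mul 16))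
  simp only [Pd]
  refine H.congr_deriv ?_
  push_cast
  ring

private lemma hPa (x : ℝ) : HasDerivAt (fun x : ℝ => Pa (Real.exp (2*x)))
    (2 * Real.exp (2*x) * (-1296*(Real.exp (2*x)) + 2304*(Real.exp (2*x))^2 - 1024*(Real.exp (2*x))^3)) x := by
  have h := hasDerivAt_E x
  have H := ((((hasDerivAt_const x ((-48):ℝ)).sub ((h.pow 2).const_mul 648)).add ((h.pow 3).const_mul 768)).sub ((h.pow 4).const_mul 256))
  simp only [Pa]
  refine H.congr_deriv ?_
  push_cast
  ring

private lemma hPw (x : ℝ) : HasDerivAt (fun x : ℝ => Pw (Real.exp (2*x)))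
    (2 * Real.exp (2*x) * (98002320948793916573184*(Real.exp (2*x)) - 770992925901481406988288*(Real.exp (2*x))^2 - 8425156590514337284793856*(Real.exp (2*x))^3 + 66133343727914652068290560*(Real.exp (2*x))^4 - 216673448484733778910185568*(Real.exp (2*x))^5 + 754747632627239399388893184*(Real.exp (2*x))^6 - 2064661978821638622427299840*(Real.exp (2*x))^7 + 3737303622950354364371042304*(Real.exp (2*x))^8 - 3382524152863351744714329600*(Real.exp (2*x))^9 + 1666564400192845859811950592*(Real.exp (2*x))^10 - 1158201486078383489745813504*(Real.exp (2*x))^11 + 842230476400481384326496256*(Real.exp (2*x))^12 - 505189907654711096769552384*(Real.exp (2*x))^13 + 261535242786041205840936960*(Real.exp (2*x))^14 - 116501308020419507584499712*(Real.exp (2*x))^15 - 9844615370720463108046848*(Real.exp (2*x))^17)) x := by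
  have h := hasDerivAt_E x
  have H := (((((((((((((((((hasDerivAt_const x ((-128624188346937114624):ℝ)).add ((h.pow 2).const_mul 49001160474396958286592)).sub ((h.pow 3).const_mul 256997641967160468996096)).sub ((h.pow 4).const_mul 2106289147628584321198464)).add ((h.pow 5).const_mul 13226668745582930413658112)).sub ((h.pow 6).const_mul 36112241414122296485030928)).add ((h.pow 7).const_mul 107821090375319914198413312)).sub ((h.pow 8).const_mul 258082747352704827803412480)).add ((h.pow 9).const_mul 415255958105594929374560256)).sub ((h.pow 10).const_mul 338252415286335174471432960)).add ((h.pow 11).const_mul 151505854562985987255631872)).sub ((h.pow 12).const_mul 96516790506531957478817792)).add ((h.pow 13).const_mul 64786959723113952640499712)).sub ((h.pow 14).const_mul 36084993403907935483539456)).add ((h.pow 15).const_mul 17435682852402747056062464)).sub ((h.pow 16).const_mul 7281331751276219224031232)).sub ((h.pow 18).const_mul 546923076151136839335936))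
  simp only [Pw]
  refine H.congr_deriv ?_
  push_cast
  ring

/-- Mass and energy of the benchmark initial value `u₀` of the stationary
two-soliton solution: `∫ u₀² = 12` and `∫ (u₀′² − u₀⁴) = −48`. -/
theorem benchmark_initial_mass_energy (u₀ : ℝ → ℝ)
    (h : ∀ x : ℝ, u₀ x =
      (8 * (9 * Real.exp (-4 * x) + 16 * Real.exp (4 * x))
        - 32 * (4 * Real.exp (-2 * x) + 9 * Real.exp (2 * x)))
      / (-128 + 4 * Real.exp (-6 * x) + 16 * Real.exp (6 * x)
          + 81 * Real.exp (-2 * x) + 64 * Real.exp (2 * x))) :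
    (∫ x : ℝ, u₀ x ^ 2) = 12 ∧
    (∫ x : ℝ, (deriv u₀ x ^ 2 - u₀ x ^ 4)) = -48 := by
  have hE : ∀ x : ℝ, (0:ℝ) < Real.exp (2*x) := fun x => Real.exp_pos _
  have hu : ∀ x : ℝ, u₀ x = Pn (Real.exp (2*x)) / Pd (Real.exp (2*x)) := by
    intro x
    have h2 : Real.exp (2*x) ≠ 0 := (hE x).ne'
    have e4 : Real.exp (4*x) = Real.exp (2*x)^2 := by
      rw [sq, ← Real.exp_add]; exact congrArg Real.exp (by ring)
    have e6 : Real.exp (6*x) = Real.exp (2*x)^3 := by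
      rw [pow_succ, sq, ← Real.exp_add, ← Real.exp_add]; exact congrArg Real.exp (by ring)
    have em2 : Real.exp (-2*x) = (Real.exp (2*x))⁻¹ := by
      rw [← Real.exp_neg]; exact congrArg Real.exp (by ring)
    have em4 : Real.exp (-4*x) = (Real.exp (2*x)^2)⁻¹ := by
      rw [← e4, ← Real.exp_neg]; exact congrArg Real.exp (by ring)
    have em6 : Real.exp (-6*x) = (Real.exp (2*x)^3)⁻¹ := by
      rw [← e6, ← Real.exp_neg]; exact congrArg Real.exp (by ring)
    rw [h x, em6, em4, em2, e6, e4]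
    have hden0 : (-128 + 4 * (Real.exp (2*x)^3)⁻¹ + 16 * Real.exp (2*x)^3
        + 81 * (Real.exp (2*x))⁻¹ + 64 * Real.exp (2*x))
        = Pd (Real.exp (2*x)) / Real.exp (2*x)^3 := by
      simp only [Pd]; field_simp; ring
    rw [hden0, div_div_eq_mul_div, div_eq_div_iff (Pd_pos _).ne' (Pd_pos _).ne']
    simp only [Pn]
    field_simp
    ring
  have hV : ∀ x : ℝ, HasDerivAt u₀
      (2 * Real.exp (2*x) * Pk (Real.exp (2*x)) / Pd (Real.exp (2*x))^2) x := by
    have hu0 : u₀ = fun x => Pn (Real.exp (2*x)) / Pd (Real.exp (2*x)) := funext hu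
    intro x
    rw [hu0]
    have H := (hPn x).div (hPd x) (Pd_pos (Real.exp (2*x))).ne'
    refine H.congr_deriv ?_
    rw [div_eq_div_iff (by have h0 := Pd_pos (Real.exp (2*x)); positivity) (by have h0 := Pd_pos (Real.exp (2*x)); positivity)]
    simp only [Pn, Pd, Pk]
    ring
  have hdv : ∀ x : ℝ, deriv u₀ x
      = 2 * Real.exp (2*x) * Pk (Real.exp (2*x)) / Pd (Real.exp (2*x))^2 :=
    fun x => (hV x).deriv
  have hb : ∀ x : ℝ, u₀ x ^ 2 ≤ 512 := by
    intro x
    rw [hu x, div_pow, div_le_iff₀ (by have h0 := Pd_pos (Real.exp (2*x)); positivity)]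
    exact Pbound _ (hE x).le
  have tEbot : Tendsto (fun x : ℝ => Real.exp (2*x)) atBot (𝓝 0) := by
    apply Real.tendsto_exp_atBot.comp
    exact (tendsto_const_mul_atBot_of_pos two_pos).2 tendsto_id
  have tEtop : Tendsto (fun x : ℝ => Real.exp (-(2*x))) atTop (𝓝 0) := by
    apply Real.tendsto_exp_atBot.comp
    exact tendsto_neg_atTop_atBot.comp ((tendsto_const_mul_atTop_of_pos two_pos).2 tendsto_id)
  have hFm : ∀ x : ℝ, HasDerivAt (fun x : ℝ => Pa (Real.exp (2*x)) / Pd (Real.exp (2*x)))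
      (u₀ x ^ 2) x := by
    intro x
    have H := (hPa x).div (hPd x) (Pd_pos (Real.exp (2*x))).ne'
    refine H.congr_deriv ?_
    rw [hu x, div_pow, div_eq_div_iff (by have h0 := Pd_pos (Real.exp (2*x)); positivity) (by have h0 := Pd_pos (Real.exp (2*x)); positivity)]
    simp only [Pn, Pd, Pa]
    ring
  have contFA : Continuous (fun s : ℝ => Pa s / Pd s) :=
    cont_Pa.div cont_Pd (fun s => (Pd_pos s).ne')
  have tFb : Tendsto (fun x : ℝ => Pa (Real.exp (2*x)) / Pd (Real.exp (2*x))) atBot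
      (𝓝 (-12)) := by
    have h0 : Pa (0:ℝ) / Pd 0 = -12 := by norm_num [Pa, Pd]
    have t1 := (contFA.tendsto 0).comp tEbot
    rw [h0] at t1
    exact t1
  have hAz : ∀ x : ℝ, Pa (Real.exp (2*x)) / Pd (Real.exp (2*x))
      = Par (Real.exp (-(2*x))) / Pdr (Real.exp (-(2*x))) := by
    intro x
    have hz : Real.exp (-(2*x)) = (Real.exp (2*x))⁻¹ := Real.exp_neg _
    rw [hz, div_eq_div_iff (Pd_pos _).ne' (Pdr_pos _).ne']
    simp only [Pa, Pd, Par, Pdr]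
    field_simp
    ring
  have contFAr : Continuous (fun s : ℝ => Par s / Pdr s) :=
    cont_Par.div cont_Pdr (fun s => (Pdr_pos s).ne')
  have tFt : Tendsto (fun x : ℝ => Pa (Real.exp (2*x)) / Pd (Real.exp (2*x))) atTop
      (𝓝 0) := by
    have h0 : Par (0:ℝ) / Pdr 0 = 0 := by norm_num [Par, Pdr]
    have t1 := (contFAr.tendsto 0).comp tEtop
    rw [h0] at t1
    exact Tendsto.congr (fun x => (hAz x).symm) t1
  obtain ⟨int_m, val_m⟩ := ftc_nonneg hFm (fun x => sq_nonneg _) tFb tFt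
  have mass : (∫ x : ℝ, u₀ x ^ 2) = 12 := by rw [val_m]; norm_num
  refine ⟨mass, ?_⟩
  have hGd : ∀ x : ℝ, HasDerivAt (fun x : ℝ =>
      Pw (Real.exp (2*x)) / ((2739924764490421875:ℝ) * Pd (Real.exp (2*x))^3)
        + 512 * (Pa (Real.exp (2*x)) / Pd (Real.exp (2*x))))
      (deriv u₀ x ^ 2 - u₀ x ^ 4 + 512 * u₀ x ^ 2) x := by
    intro x
    have hden := ((hPd x).pow 3).const_mul (2739924764490421875:ℝ)
    have hne : (2739924764490421875:ℝ) * Pd (Real.exp (2*x))^3 ≠ 0 := by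
      have h0 := Pd_pos (Real.exp (2*x)); positivity
    have H := ((hPw x).div hden hne).add
      (((hPa x).div (hPd x) (Pd_pos (Real.exp (2*x))).ne').const_mul 512)
    refine H.congr_deriv ?_
    simp only [Pi.pow_apply]
    rw [hdv x, hu x]
    have hpd := (Pd_pos (Real.exp (2*x))).ne'
    field_simp
    simp only [Pn, Pd, Pa, Pk, Pw]
    push_cast
    ring
  have hGpos : ∀ x : ℝ, 0 ≤ deriv u₀ x ^ 2 - u₀ x ^ 4 + 512 * u₀ x ^ 2 := by
    intro x
    nlinarith [sq_nonneg (deriv u₀ x), sq_nonneg (u₀ x), hb x]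
  have contW : Continuous (fun s : ℝ => Pw s / ((2739924764490421875:ℝ) * Pd s^3)) :=
    cont_Pw.div (continuous_const.mul (cont_Pd.pow 3)) (fun s => by have h0 := Pd_pos s; positivity)
  have contWr : Continuous (fun s : ℝ => Pwr s / ((2739924764490421875:ℝ) * Pdr s^3)) :=
    cont_Pwr.div (continuous_const.mul (cont_Pdr.pow 3)) (fun s => by have h0 := Pdr_pos s; positivity)
  have hWz : ∀ x : ℝ, Pw (Real.exp (2*x)) / ((2739924764490421875:ℝ) * Pd (Real.exp (2*x))^3)
      = Pwr (Real.exp (-(2*x))) / ((2739924764490421875:ℝ) * Pdr (Real.exp (-(2*x)))^3) := by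
    intro x
    have hz : Real.exp (-(2*x)) = (Real.exp (2*x))⁻¹ := Real.exp_neg _
    have hpd := (Pd_pos (Real.exp (2*x))).ne'
    have hpdr := (Pdr_pos ((Real.exp (2*x))⁻¹)).ne'
    rw [hz, div_eq_div_iff (by positivity) (by positivity)]
    simp only [Pw, Pd, Pwr, Pdr]
    field_simp
    ring
  have tGb : Tendsto (fun x : ℝ =>
      Pw (Real.exp (2*x)) / ((2739924764490421875:ℝ) * Pd (Real.exp (2*x))^3)
        + 512 * (Pa (Real.exp (2*x)) / Pd (Real.exp (2*x)))) atBot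
      (𝓝 ((-128624188346937114624) / ((2739924764490421875:ℝ) * 64) + 512 * (-12))) := by
    have h0 : Pw (0:ℝ) / ((2739924764490421875:ℝ) * Pd 0^3)
        = (-128624188346937114624) / ((2739924764490421875:ℝ) * 64) := by
      norm_num [Pw, Pd]
    have t1 := (contW.tendsto 0).comp tEbot
    rw [h0] at t1
    exact t1.add (tFb.const_mul 512)
  have tGt : Tendsto (fun x : ℝ =>
      Pw (Real.exp (2*x)) / ((2739924764490421875:ℝ) * Pd (Real.exp (2*x))^3)
        + 512 * (Pa (Real.exp (2*x)) / Pd (Real.exp (2*x)))) atTop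
      (𝓝 ((-546923076151136839335936) / ((2739924764490421875:ℝ) * 4096) + 512 * 0)) := by
    have h0 : Pwr (0:ℝ) / ((2739924764490421875:ℝ) * Pdr 0^3)
        = (-546923076151136839335936) / ((2739924764490421875:ℝ) * 4096) := by
      norm_num [Pwr, Pdr]
    have t1 := (contWr.tendsto 0).comp tEtop
    rw [h0] at t1
    exact (Tendsto.congr (fun x => (hWz x).symm) t1).add (tFt.const_mul 512)
  obtain ⟨int_g, val_g⟩ := ftc_nonneg hGd hGpos tGb tGt
  have key : (fun x : ℝ => deriv u₀ x ^ 2 - u₀ x ^ 4)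
      = fun x : ℝ => (deriv u₀ x ^ 2 - u₀ x ^ 4 + 512 * u₀ x ^ 2) - 512 * u₀ x ^ 2 := by
    funext x; ring
  rw [key, integral_sub int_g (int_m.const_mul 512), val_g, integral_const_mul, val_m]
  norm_num
end
end
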